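/- The group of permutations of the set of four augmented triads induced by Aut(S) is isomorphic to the dihedral group of order 8: the image of the group homomorphism from Aut(S) to the symmetric group on {C_aug, G_aug, D_aug, F_aug} sending (N, ν) to the restriction of ν to the augmented triads is a group of order 8 isomorphic to the dihedral group of order 8 (in particular it is a proper subgroup of the full symmetric group S₄). -/

import Mathlib

namespace CubeDance

/-- The set `X` of the 12 major triads, 12 minor triads, and 4 augmented triads. -/
inductive Triad : Type
  | maj : ZMod 12 → Triad
  | min : ZMod 12 → Triad
  | aug : ZMod 4 → Triad
  deriving DecidableEq

/-- Binary relations on `X`. -/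
abbrev RelM : Type := Triad → Triad → Prop

/-- Binary relations on `X` form a monoid under relational composition,
with identity the diagonal relation. -/
instance : Monoid RelM where
  mul R S := fun p q => ∃ r, R p r ∧ S r q
  one := fun p q => p = q
  mul_assoc R S T := by
    funext p q
    apply propext
    constructor
    · rintro ⟨r, ⟨s, h1, h2⟩, h3⟩
      exact ⟨s, h1, r, h2, h3⟩
    · rintro ⟨s, h1, r, h2, h3⟩
      exact ⟨r, ⟨s, h1, h2⟩, h3⟩
  one_mul R := by
    funext p q
    apply propext
    constructor
    · rintro ⟨r, rfl, h⟩
      exact h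
    · intro h
      exact ⟨p, rfl, h⟩
  mul_one R := by
    funext p q
    apply propext
    constructor
    · rintro ⟨r, h, rfl⟩
      exact h
    · intro h
      exact ⟨q, h, rfl⟩

/-- The relation `U`, relating `a_aug` with `x_M` whenever `x ≡ a (mod 4)` and
`a_aug` with `x_m` whenever `x ≡ a + 1 (mod 4)`. -/
def U : RelM := fun p q =>
  match p, q with
  | .aug a, .maj x => (x.val : ZMod 4) = a
  | .maj x, .aug a => (x.val : ZMod 4) = a
  | .aug a, .min x => (x.val : ZMod 4) = a + 1
  | .min x, .aug a => (x.val : ZMod 4) = a + 1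
  | _, _ => False

/-- The relation `P`, relating `x_M` with `x_m`, and each augmented triad with itself. -/
def P : RelM := fun p q =>
  match p, q with
  | .maj x, .min y => x = y
  | .min x, .maj y => x = y
  | .aug a, .aug b => a = b
  | _, _ => False

/-- The relation `L`, relating `x_M` with `(x+4)_m`, and each augmented triad with itself. -/
def L : RelM := fun p q =>
  match p, q with
  | .maj x, .min y => y = x + 4
  | .min y, .maj x => y = x + 4
  | .aug a, .aug b => a = b
  | _, _ => False

/-- The monoid `M_{U,P,L}` generated by the relations `U`, `P` and `L`. -/
def M : Submonoid RelM := Submonoid.closure {U, P, L}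

lemma U_mem : U ∈ M := Submonoid.subset_closure (Set.mem_insert _ _)

lemma P_mem : P ∈ M :=
  Submonoid.subset_closure (Set.mem_insert_of_mem _ (Set.mem_insert _ _))

lemma L_mem : L ∈ M :=
  Submonoid.subset_closure (Set.mem_insert_of_mem _ (Set.mem_insert_of_mem _ rfl))


/-- The compatibility condition defining `Aut(S)`: a pair `(N, ν)` of a monoid automorphism
of `M` and a permutation of `X` such that `p R q` implies `ν(p) N(R) ν(q)` for every
`R ∈ M` and all `p, q ∈ X`. -/
def compat (x : MulAut M × Equiv.Perm Triad) : Prop :=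
  ∀ R : M, ∀ pt q : Triad, (↑R : RelM) pt q → (↑(x.1 R) : RelM) (x.2 pt) (x.2 q)


/-! ### Infrastructure: decidability, finiteness, mask calculus -/

section Infra

open Triad

instance : Fintype Triad :=
  ⟨((Finset.univ : Finset (ZMod 12)).image Triad.maj ∪
      (Finset.univ : Finset (ZMod 12)).image Triad.min ∪
      (Finset.univ : Finset (ZMod 4)).image Triad.aug), by
    intro p; cases p <;> simp⟩

/-- reduction of a pitch class mod 4 -/
def c12 (x : ZMod 12) : ZMod 4 := (x.val : ZMod 4)

def Ub : Triad → Triad → Bool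
  | .aug a, .maj x => c12 x == a
  | .maj x, .aug a => c12 x == a
  | .aug a, .min x => c12 x == a + 1
  | .min x, .aug a => c12 x == a + 1
  | _, _ => false

def Pb : Triad → Triad → Bool
  | .maj x, .min y => x == y
  | .min x, .maj y => x == y
  | .aug a, .aug b => a == b
  | _, _ => false

def Lb : Triad → Triad → Bool
  | .maj x, .min y => y == x + 4
  | .min y, .maj x => y == x + 4
  | .aug a, .aug b => a == b
  | _, _ => false

lemma U_iff (p q : Triad) : U p q ↔ Ub p q = true := by
  cases p <;> cases q <;> simp [U, Ub, c12]

lemma P_iff (p q : Triad) : P p q ↔ Pb p q = true := by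
  cases p <;> cases q <;> simp [P, Pb]

lemma L_iff (p q : Triad) : L p q ↔ Lb p q = true := by
  cases p <;> cases q <;> simp [L, Lb]

instance (p q : Triad) : Decidable (U p q) := decidable_of_iff _ (U_iff p q).symm
instance (p q : Triad) : Decidable (P p q) := decidable_of_iff _ (P_iff p q).symm
instance (p q : Triad) : Decidable (L p q) := decidable_of_iff _ (L_iff p q).symm

lemma mul_apply (R S : RelM) (p q : Triad) : (R * S) p q ↔ ∃ r, R p r ∧ S r q := Iff.rfl

lemma one_apply (p q : Triad) : (1 : RelM) p q ↔ p = q := Iff.rfl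

lemma P_mul_P : P * P = 1 := by
  have h : ∀ p q : Triad, (∃ r, P p r ∧ P r q) ↔ p = q := by decide
  funext p q
  exact propext ((mul_apply P P p q).trans ((h p q).trans (one_apply p q).symm))

lemma P_ne_one : P ≠ 1 := by
  intro h
  have : P (Triad.maj 0) (Triad.maj 0) := h ▸ rfl
  exact this

end Infra

/-! ### The quotient mask calculus -/

section Masks

/-- type of a triad : 0 = major, 1 = minor, 2 = augmented -/
def ty : Triad → Fin 3
  | .maj _ => 0
  | .min _ => 1
  | .aug _ => 2

/-- mod-4 index of a triad -/
def idx4 : Triad → ZMod 4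
  | .maj x => c12 x
  | .min x => c12 x
  | .aug a => a

lemma ty_aug_eq (q : Triad) (h : ty q = 2) : q = Triad.aug (idx4 q) := by
  cases q <;> simp [ty] at h ⊢ <;> rfl

/-- A "mask": a translation-invariant relation on the 12-element quotient,
encoded by which differences occur between each pair of types. -/
def br (n : Nat) : Fin 3 → Fin 3 → ZMod 4 → Bool := fun i j d =>
  n.testBit (12 * i.val + 4 * j.val + d.val)

/-- composition of masks -/
def compB (f g : Fin 3 → Fin 3 → ZMod 4 → Bool) : Fin 3 → Fin 3 → ZMod 4 → Bool :=
  fun i k d => decide (∃ j s, f i j s = true ∧ g j k (d - s) = true)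

/-- the masks of all 36 elements of the quotient monoid -/
def LTm : List Nat := [303040512, 307235328, 310378752, 312476928, 554698752,
  558893568, 562036992, 564135168, 1511000064, 1515194880, 1518338304, 1520436480,
  2769291264, 2773486080, 2776629504, 2778727680, 4294971408, 4295032833, 4295041153,
  4295065633, 4295102488, 4295336101, 4295495698, 4295643226, 21474910337, 21474934817,
  21474971672, 21475205285, 21475364882, 21475512410, 42949746817, 42949771297,
  42949808152, 42950041765, 42950201362, 42950348890]

def u36 : Nat := 562036992
def p36 : Nat := 4294971408
def i36 : Nat := 4295032833

lemma memU36 : u36 ∈ LTm := by decide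
lemma memP36 : p36 ∈ LTm := by decide
lemma memI36 : i36 ∈ LTm := by decide

/-- forward soundness of a mask for a relation -/
def Fw (R : RelM) (m : Fin 3 → Fin 3 → ZMod 4 → Bool) : Prop :=
  ∀ p q, R p q → m (ty p) (ty q) (idx4 q - idx4 p) = true

/-- backward completeness of a mask for a relation -/
def Bw (R : RelM) (m : Fin 3 → Fin 3 → ZMod 4 → Bool) : Prop :=
  ∀ (p : Triad) (j : Fin 3) (d : ZMod 4), m (ty p) j d = true →
    ∃ q, ty q = j ∧ idx4 q = idx4 p + d ∧ R p q

lemma FwU : Fw U (br u36) := by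
  have h : ∀ p q, Ub p q = true → br u36 (ty p) (ty q) (idx4 q - idx4 p) = true := by decide
  exact fun p q hpq => h p q ((U_iff p q).mp hpq)

lemma FwP : Fw P (br p36) := by
  have h : ∀ p q, Pb p q = true → br p36 (ty p) (ty q) (idx4 q - idx4 p) = true := by decide
  exact fun p q hpq => h p q ((P_iff p q).mp hpq)

lemma FwL : Fw L (br p36) := by
  have h : ∀ p q, Lb p q = true → br p36 (ty p) (ty q) (idx4 q - idx4 p) = true := by decide
  exact fun p q hpq => h p q ((L_iff p q).mp hpq)

lemma BwU : Bw U (br u36) := by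
  have h : ∀ (p : Triad) (j : Fin 3) (d : ZMod 4), br u36 (ty p) j d = true →
      ∃ q, ty q = j ∧ idx4 q = idx4 p + d ∧ Ub p q = true := by decide
  intro p j d hd
  obtain ⟨q, h1, h2, h3⟩ := h p j d hd
  exact ⟨q, h1, h2, (U_iff p q).mpr h3⟩

lemma BwP : Bw P (br p36) := by
  have h : ∀ (p : Triad) (j : Fin 3) (d : ZMod 4), br p36 (ty p) j d = true →
      ∃ q, ty q = j ∧ idx4 q = idx4 p + d ∧ Pb p q = true := by decide
  intro p j d hd
  obtain ⟨q, h1, h2, h3⟩ := h p j d hd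
  exact ⟨q, h1, h2, (P_iff p q).mpr h3⟩

lemma BwL : Bw L (br p36) := by
  have h : ∀ (p : Triad) (j : Fin 3) (d : ZMod 4), br p36 (ty p) j d = true →
      ∃ q, ty q = j ∧ idx4 q = idx4 p + d ∧ Lb p q = true := by decide
  intro p j d hd
  obtain ⟨q, h1, h2, h3⟩ := h p j d hd
  exact ⟨q, h1, h2, (L_iff p q).mpr h3⟩

lemma Fw_one : Fw 1 (br i36) := by
  intro p q h
  have hpq : p = q := h
  subst hpq
  rw [sub_self]
  have h2 : ∀ i : Fin 3, br i36 i i 0 = true := by decide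
  exact h2 _

lemma i36_diag : ∀ (i j : Fin 3) (d : ZMod 4), br i36 i j d = true → j = i ∧ d = 0 := by decide

lemma Bw_one : Bw 1 (br i36) := by
  intro p j d hd
  obtain ⟨h1, h2⟩ := i36_diag _ _ _ hd
  exact ⟨p, h1.symm ▸ rfl, by rw [h2, add_zero], rfl⟩

lemma Fw_mul {R S : RelM} {m1 m2} (hR : Fw R m1) (hS : Fw S m2) :
    Fw (R * S) (compB m1 m2) := by
  intro p q h
  obtain ⟨r, h1, h2⟩ := (mul_apply R S p q).mp h
  unfold compB
  rw [decide_eq_true_eq]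
  refine ⟨ty r, idx4 r - idx4 p, hR _ _ h1, ?_⟩
  have h3 := hS _ _ h2
  rwa [sub_sub_sub_cancel_right]

lemma Bw_mul {R S : RelM} {m1 m2} (hR : Bw R m1) (hS : Bw S m2) :
    Bw (R * S) (compB m1 m2) := by
  intro p k d hd
  rw [compB, decide_eq_true_eq] at hd
  obtain ⟨j, s, h1, h2⟩ := hd
  obtain ⟨r, hr1, hr2, hr3⟩ := hR p j s h1
  rw [← hr1] at h2
  obtain ⟨q, hq1, hq2, hq3⟩ := hS r k (d - s) h2
  refine ⟨q, hq1, by rw [hq2, hr2]; ring, (mul_apply R S p q).mpr ⟨r, hr3, hq3⟩⟩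

def pt3 : Fin 3 → Triad
  | 0 => Triad.maj 0
  | 1 => Triad.min 0
  | 2 => Triad.aug 0

lemma ty_pt3 : ∀ i, ty (pt3 i) = i := by decide

lemma mask_unique {R : RelM} {m1 m2} (h1f : Fw R m1) (h1b : Bw R m1)
    (h2f : Fw R m2) (h2b : Bw R m2) : m1 = m2 := by
  have key : ∀ (mA mB : Fin 3 → Fin 3 → ZMod 4 → Bool), Fw R mB → Bw R mA →
      ∀ i j d, mA i j d = true → mB i j d = true := by
    intro mA mB hf hb i j d hd
    rw [← ty_pt3 i] at hd
    obtain ⟨q, hq1, hq2, hq3⟩ := hb (pt3 i) j d hd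
    have := hf _ _ hq3
    rwa [hq1, hq2, ty_pt3, add_sub_cancel_left] at this
  funext i j d
  have h1 := key m1 m2 h2f h1b i j d
  have h2 := key m2 m1 h1f h2b i j d
  cases hm : m1 i j d
  · cases hm2 : m2 i j d
    · rfl
    · exact absurd (h2 hm2) (by rw [hm]; exact Bool.false_ne_true)
  · rw [h1 hm]

end Masks

/-! ### Every element of `M` has a mask in `LTm` -/

section Theta

set_option maxRecDepth 100000 in
set_option maxHeartbeats 2000000 in
lemma stepU : ∀ n ∈ LTm, ∃ m ∈ LTm, compB (br u36) (br n) = br m := by decide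

set_option maxRecDepth 100000 in
set_option maxHeartbeats 2000000 in
lemma stepP : ∀ n ∈ LTm, ∃ m ∈ LTm, compB (br p36) (br n) = br m := by decide

lemma theta : ∀ R : RelM, R ∈ M → ∃ n ∈ LTm, Fw R (br n) ∧ Bw R (br n) := by
  intro R hR
  induction hR using Submonoid.closure_induction_left with
  | one => exact ⟨i36, memI36, Fw_one, Bw_one⟩
  | mul_left g hg y hy ih =>
    obtain ⟨n, hn, hf, hb⟩ := ih
    rcases hg with rfl | rfl | rfl
    · obtain ⟨m, hm, heq⟩ := stepU n hn
      exact ⟨m, hm, heq ▸ Fw_mul FwU hf, heq ▸ Bw_mul BwU hb⟩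
    · obtain ⟨m, hm, heq⟩ := stepP n hn
      exact ⟨m, hm, heq ▸ Fw_mul FwP hf, heq ▸ Bw_mul BwP hb⟩
    · obtain ⟨m, hm, heq⟩ := stepP n hn
      exact ⟨m, hm, heq ▸ Fw_mul FwL hf, heq ▸ Bw_mul BwL hb⟩

end Theta

/-! ### Structural facts about elements of `M` -/

section Struct

lemma psi36 : ∀ n ∈ LTm, br n 2 2 2 = true → br n 2 2 0 = true := by decide

set_option maxRecDepth 100000 in
set_option maxHeartbeats 1000000 in
lemma inv36 : ∀ n ∈ LTm, compB (br n) (br n) = br i36 → br n = br i36 ∨ br n = br p36 := by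
  decide

lemma p36_220 : br p36 2 2 0 = true := by decide

lemma p36_refl : ∀ (i : Fin 3) (d : ZMod 4), br p36 i i d = true → i = 2 := by decide

/-- the transposition T₁ acting on triads -/
def t1f : Triad → Triad
  | .maj x => .maj (x + 1)
  | .min x => .min (x + 1)
  | .aug a => .aug (a + 1)

def t1g : Triad → Triad
  | .maj x => .maj (x - 1)
  | .min x => .min (x - 1)
  | .aug a => .aug (a - 1)

def t1 : Equiv.Perm Triad :=
  ⟨t1f, t1g, by intro p; cases p <;> simp [t1f, t1g], by intro p; cases p <;> simp [t1f, t1g]⟩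

/-- the inversion I₁ acting on triads -/
def i1f : Triad → Triad
  | .maj x => .min (1 - x)
  | .min x => .maj (1 - x)
  | .aug a => .aug (-a)

lemma i1f_inv : Function.Involutive i1f := by
  intro p; cases p <;> simp [i1f]

def i1 : Equiv.Perm Triad := i1f_inv.toPerm

lemma equiv_t1 : ∀ R ∈ M, ∀ p q, R p q → R (t1f p) (t1f q) := by
  intro R hR
  induction hR using Submonoid.closure_induction with
  | mem g hg =>
    rcases hg with rfl | rfl | rfl
    · have : ∀ p q, U p q → U (t1f p) (t1f q) := by decide
      exact this
    · have : ∀ p q, P p q → P (t1f p) (t1f q) := by decide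
      exact this
    · have : ∀ p q, L p q → L (t1f p) (t1f q) := by decide
      exact this
  | one => exact fun p q h => congrArg t1f h
  | mul R S hR hS ihR ihS =>
    intro p q h
    obtain ⟨r, h1, h2⟩ := h
    exact ⟨t1f r, ihR _ _ h1, ihS _ _ h2⟩

lemma equiv_i1 : ∀ R ∈ M, ∀ p q, R p q → R (i1f p) (i1f q) := by
  intro R hR
  induction hR using Submonoid.closure_induction with
  | mem g hg =>
    rcases hg with rfl | rfl | rfl
    · have : ∀ p q, U p q → U (i1f p) (i1f q) := by decide
      exact this
    · have : ∀ p q, P p q → P (i1f p) (i1f q) := by decide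
      exact this
    · have : ∀ p q, L p q → L (i1f p) (i1f q) := by decide
      exact this
  | one => exact fun p q h => congrArg i1f h
  | mul R S hR hS ihR ihS =>
    intro p q h
    obtain ⟨r, h1, h2⟩ := h
    exact ⟨i1f r, ihR _ _ h1, ihS _ _ h2⟩

/-- iterated translation -/
lemma equiv_t1_iter (R : RelM) (hR : R ∈ M) (k : ℕ) :
    ∀ p q, R p q → R (t1f^[k] p) (t1f^[k] q) := by
  induction k with
  | zero => exact fun p q h => h
  | succ n ih =>
    intro p q h
    rw [Function.iterate_succ_apply']
    rw [Function.iterate_succ_apply']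
    exact equiv_t1 R hR _ _ (ih p q h)

lemma t1f_iter_maj (k : ℕ) (x : ZMod 12) : t1f^[k] (Triad.maj x) = Triad.maj (x + k) := by
  induction k with
  | zero => simp
  | succ n ih => rw [Function.iterate_succ_apply', ih, t1f]; push_cast; ring_nf

lemma t1f_iter_min (k : ℕ) (x : ZMod 12) : t1f^[k] (Triad.min x) = Triad.min (x + k) := by
  induction k with
  | zero => simp
  | succ n ih => rw [Function.iterate_succ_apply', ih, t1f]; push_cast; ring_nf

/-- fibres of the mod-4 reduction -/
lemma c12_fibers : ∀ x y : ZMod 12, c12 y = c12 x → y = x ∨ y = x + 4 ∨ y = x + 8 := by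
  decide

/-- The key classification of involutions in `M`: every `R ∈ M` with `R * R = 1` and
`R ≠ 1` is reflexive exactly at the augmented triads. -/
lemma involution_class (R : RelM) (hR : R ∈ M) (hsq : R * R = 1) (hne : R ≠ 1) :
    (∀ a, R (Triad.aug a) (Triad.aug a)) ∧ (∀ p, R p p → ∃ a, p = Triad.aug a) := by
  obtain ⟨n, hn, hf, hb⟩ := theta R hR
  have hmask : compB (br n) (br n) = br i36 := by
    have h1f : Fw (R * R) (compB (br n) (br n)) := Fw_mul hf hf
    have h1b : Bw (R * R) (compB (br n) (br n)) := Bw_mul hb hb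
    rw [hsq] at h1f h1b
    exact mask_unique h1f h1b Fw_one Bw_one
  rcases inv36 n hn hmask with hcase | hcase
  · -- `R` projects to the identity: show `R = 1`, contradiction
    exfalso
    apply hne
    rw [hcase] at hf hb
    have hsq' : ∀ p r q, R p r → R r q → p = q := by
      intro p r q h1 h2
      have h3 : (R * R) p q := ⟨r, h1, h2⟩
      rw [hsq] at h3
      exact h3
    have hshift : ∀ (k : ℕ) (x y : ZMod 12), R (Triad.maj x) (Triad.maj y) →
        R (Triad.maj (x + (k : ZMod 12))) (Triad.maj (y + (k : ZMod 12))) := by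
      intro k x y h
      have h2 := equiv_t1_iter R hR k _ _ h
      rwa [t1f_iter_maj, t1f_iter_maj] at h2
    have hshiftm : ∀ (k : ℕ) (x y : ZMod 12), R (Triad.min x) (Triad.min y) →
        R (Triad.min (x + (k : ZMod 12))) (Triad.min (y + (k : ZMod 12))) := by
      intro k x y h
      have h2 := equiv_t1_iter R hR k _ _ h
      rwa [t1f_iter_min, t1f_iter_min] at h2
    have c4 : ((4 : ℕ) : ZMod 12) = 4 := by norm_num
    have c8 : ((8 : ℕ) : ZMod 12) = 8 := by norm_num
    -- every pair of `R` is diagonal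
    have hdiag : ∀ p q, R p q → q = p := by
      intro p q h
      have h1 := hf p q h
      obtain ⟨hty, hd⟩ := i36_diag _ _ _ h1
      have hidx : idx4 q = idx4 p := sub_eq_zero.mp hd
      cases p with
      | maj x =>
        cases q with
        | maj y =>
          rcases c12_fibers x y hidx with rfl | rfl | rfl
          · rfl
          · exfalso
            have h2 := hshift 4 x (x + 4) h
            rw [c4] at h2
            have h3 := hsq' _ _ _ h h2
            have h4 : x = x + 4 + 4 := by injection h3
            rw [add_assoc] at h4
            exact absurd (left_eq_add.mp h4) (by decide)
          · exfalso
            have h2 := hshift 8 x (x + 8) h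
            rw [c8] at h2
            have h3 := hsq' _ _ _ h h2
            have h4 : x = x + 8 + 8 := by injection h3
            rw [add_assoc] at h4
            exact absurd (left_eq_add.mp h4) (by decide)
        | min y => simp [ty] at hty
        | aug b => simp [ty] at hty
      | min x =>
        cases q with
        | maj y => simp [ty] at hty
        | min y =>
          rcases c12_fibers x y hidx with rfl | rfl | rfl
          · rfl
          · exfalso
            have h2 := hshiftm 4 x (x + 4) h
            rw [c4] at h2
            have h3 := hsq' _ _ _ h h2
            have h4 : x = x + 4 + 4 := by injection h3
            rw [add_assoc] at h4
            exact absurd (left_eq_add.mp h4) (by decide)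
          · exfalso
            have h2 := hshiftm 8 x (x + 8) h
            rw [c8] at h2
            have h3 := hsq' _ _ _ h h2
            have h4 : x = x + 8 + 8 := by injection h3
            rw [add_assoc] at h4
            exact absurd (left_eq_add.mp h4) (by decide)
        | aug b => simp [ty] at hty
      | aug a =>
        cases q with
        | maj y => simp [ty] at hty
        | min y => simp [ty] at hty
        | aug b =>
          have hba : (b : ZMod 4) = a := hidx
          rw [hba]
    -- `R` is also reflexive
    have hrefl : ∀ p, R p p := by
      intro p
      have hbit : br i36 (ty p) (ty p) 0 = true := by
        have h0 : ∀ i : Fin 3, br i36 i i 0 = true := by decide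
        exact h0 _
      obtain ⟨q, _, _, hq3⟩ := hb p (ty p) 0 hbit
      have hqp := hdiag p q hq3
      rwa [hqp] at hq3
    funext p q
    apply propext
    exact ⟨fun h => hdiag p q h ▸ rfl, fun h => h ▸ hrefl p⟩
  · -- `R` projects to `P`
    rw [hcase] at hf hb
    constructor
    · intro a
      obtain ⟨q, hq1, hq2, hq3⟩ := hb (Triad.aug a) 2 0 p36_220
      have hq : q = Triad.aug (idx4 q) := ty_aug_eq q hq1
      have h2 : idx4 q = a := by
        rw [hq2]
        show a + 0 = a
        ring
      rw [hq, h2] at hq3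
      exact hq3
    · intro p h
      have h1 := hf p p h
      rw [sub_self] at h1
      have h2 := p36_refl (ty p) 0 h1
      exact ⟨idx4 p, ty_aug_eq p h2⟩

end Struct

/-! ### The group `Aut(S)` as a subgroup of `MulAut M × Perm Triad` -/

section HGroup

instance : Finite (MulAut M) :=
  Finite.of_injective (fun e => (e : M → M)) DFunLike.coe_injective

lemma compat_one : compat 1 := fun _ _ _ h => h

lemma compat_mul (x y : MulAut M × Equiv.Perm Triad) (hx : compat x) (hy : compat y) :
    compat (x * y) := fun R p q h => hx (y.1 R) _ _ (hy R p q h)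

lemma compat_pow (x : MulAut M × Equiv.Perm Triad) (hx : compat x) :
    ∀ n : ℕ, compat (x ^ n) := by
  intro n
  induction n with
  | zero => rw [pow_zero]; exact compat_one
  | succ k ih => rw [pow_succ]; exact compat_mul _ _ ih hx

/-- the subgroup of compatible pairs -/
def Hgrp : Subgroup (MulAut M × Equiv.Perm Triad) where
  carrier := {x | compat x}
  one_mem' := compat_one
  mul_mem' := fun hx hy => compat_mul _ _ hx hy
  inv_mem' := by
    intro x hx
    have hpos : 0 < orderOf x := orderOf_pos x
    have h1 : x * x ^ (orderOf x - 1) = 1 := by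
      rw [← pow_succ', Nat.sub_add_cancel hpos]
      exact pow_orderOf_eq_one x
    have h2 : x⁻¹ = x ^ (orderOf x - 1) := inv_eq_of_mul_eq_one_right h1
    rw [Set.mem_setOf_eq, h2]
    exact compat_pow x hx _

lemma mem_Hgrp (x : MulAut M × Equiv.Perm Triad) : x ∈ Hgrp ↔ compat x := Iff.rfl

/-- inverse compatibility -/
lemma compat_inv_key {x : MulAut M × Equiv.Perm Triad} (hx' : compat x⁻¹) :
    ∀ R : M, ∀ p q : Triad, (↑(x.1 R) : RelM) (x.2 p) (x.2 q) → (↑R : RelM) p q := by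
  intro R p q h
  have h2 := hx' (x.1 R) (x.2 p) (x.2 q) h
  have e1 : (x⁻¹).1 (x.1 R) = R := by
    rw [Prod.fst_inv]
    exact (x.1).symm_apply_apply R
  have e2 : (x⁻¹).2 (x.2 p) = p := by
    rw [Prod.snd_inv]
    exact (x.2).symm_apply_apply p
  have e3 : (x⁻¹).2 (x.2 q) = q := by
    rw [Prod.snd_inv]
    exact (x.2).symm_apply_apply q
  rwa [e1, e2, e3] at h2

/-- any compatible pair maps augmented triads to augmented triads -/
lemma aug_to_aug {x : MulAut M × Equiv.Perm Triad} (hx : compat x) :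
    ∀ a : ZMod 4, ∃ b : ZMod 4, x.2 (Triad.aug a) = Triad.aug b := by
  intro a
  set Pm : M := ⟨P, P_mem⟩ with hPm
  have hPsq : Pm * Pm = 1 := Subtype.ext P_mul_P
  have hRsq : (↑(x.1 Pm) : RelM) * (↑(x.1 Pm) : RelM) = 1 := by
    have : (x.1 Pm) * (x.1 Pm) = 1 := by
      rw [← map_mul, hPsq, map_one]
    calc (↑(x.1 Pm) : RelM) * ↑(x.1 Pm) = ↑(x.1 Pm * x.1 Pm) := rfl
      _ = ↑(1 : M) := by rw [this]
      _ = 1 := rfl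
  have hRne : (↑(x.1 Pm) : RelM) ≠ 1 := by
    intro h
    have h1 : x.1 Pm = 1 := Subtype.ext h
    have h2 : Pm = 1 := (x.1).injective (by rw [h1, map_one])
    apply P_ne_one
    have := congrArg (Subtype.val) h2
    exact this
  obtain ⟨href, _⟩ := involution_class _ (SetLike.coe_mem (x.1 Pm)) hRsq hRne
  have hPaa : (↑Pm : RelM) (Triad.aug a) (Triad.aug a) := rfl
  have h3 := hx Pm _ _ hPaa
  obtain ⟨_, honly⟩ := involution_class _ (SetLike.coe_mem (x.1 Pm)) hRsq hRne
  obtain ⟨b, hb⟩ := honly _ h3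
  exact ⟨b, hb⟩

def augIdx : Triad → ZMod 4
  | .aug a => a
  | _ => 0

/-- the action on the augmented-triad indices -/
def sigmaFun (x : MulAut M × Equiv.Perm Triad) : ZMod 4 → ZMod 4 :=
  fun a => augIdx (x.2 (Triad.aug a))

lemma sigma_spec {x : MulAut M × Equiv.Perm Triad} (hx : compat x) (a : ZMod 4) :
    x.2 (Triad.aug a) = Triad.aug (sigmaFun x a) := by
  obtain ⟨b, hb⟩ := aug_to_aug hx a
  rw [sigmaFun, hb]
  rfl

/-- the permutation of `ZMod 4` induced by an element of `Hgrp` -/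
def f0 (x : Hgrp) : Equiv.Perm (ZMod 4) where
  toFun := sigmaFun x
  invFun := sigmaFun (x : MulAut M × Equiv.Perm Triad)⁻¹
  left_inv := by
    intro a
    have h1 := sigma_spec x.2 a
    have h2 := sigma_spec ((mem_Hgrp _).mp (inv_mem x.2)) (sigmaFun (x : MulAut M × Equiv.Perm Triad) a)
    have h3 : ((x : MulAut M × Equiv.Perm Triad)⁻¹).2 ((x : MulAut M × Equiv.Perm Triad).2 (Triad.aug a)) = Triad.aug a := by
      rw [Prod.snd_inv]
      exact Equiv.symm_apply_apply _ _
    rw [h1] at h3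
    rw [h2] at h3
    injection h3
  right_inv := by
    intro a
    have h2 := sigma_spec ((mem_Hgrp _).mp (inv_mem x.2)) a
    have h1 := sigma_spec x.2 (sigmaFun (x : MulAut M × Equiv.Perm Triad)⁻¹ a)
    have h3 : (x : MulAut M × Equiv.Perm Triad).2 (((x : MulAut M × Equiv.Perm Triad)⁻¹).2 (Triad.aug a)) = Triad.aug a := by
      rw [Prod.snd_inv]
      exact Equiv.apply_symm_apply _ _
    rw [h2] at h3
    rw [h1] at h3
    injection h3

lemma f0_mul (x y : Hgrp) : f0 (x * y) = f0 x * f0 y := by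
  ext a
  show sigmaFun _ a = sigmaFun x (sigmaFun y a)
  rw [sigmaFun]
  have hxy : ((x * y : Hgrp) : MulAut M × Equiv.Perm Triad).2 (Triad.aug a) =
      (x : MulAut M × Equiv.Perm Triad).2 ((y : MulAut M × Equiv.Perm Triad).2 (Triad.aug a)) := rfl
  rw [hxy, sigma_spec y.2 a, sigma_spec x.2]
  rfl

/-- the homomorphism from `Aut(S)` to `S₄` -/
def fHom : Hgrp →* Equiv.Perm (ZMod 4) := MonoidHom.mk' f0 f0_mul

lemma fHom_spec (x : Hgrp) (a : ZMod 4) :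
    (x : MulAut M × Equiv.Perm Triad).2 (Triad.aug a) = Triad.aug (fHom x a) :=
  sigma_spec x.2 a

end HGroup

/-! ### Identification of the induced group of permutations -/

section Final

open DihedralGroup

lemma upu_pair : ∀ a : ZMod 4, (U * P * U) (Triad.aug a) (Triad.aug (a + 1)) ∧
    (U * P * U) (Triad.aug a) (Triad.aug (a + 3)) := by
  simp only [mul_apply]
  decide

lemma upu_nofix : ∀ c : ZMod 4, ¬ (U * P * U) (Triad.aug c) (Triad.aug c) := by
  simp only [mul_apply]
  decide

lemma zmod4_cases : ∀ a : ZMod 4, a = 0 ∨ a = 1 ∨ a = 2 ∨ a = 3 := by decide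

/-- the element `U·P·U` of `M` -/
def R0 : M := ⟨U, U_mem⟩ * ⟨P, P_mem⟩ * ⟨U, U_mem⟩

lemma R0_coe : (↑R0 : RelM) = U * P * U := rfl

lemma step_diff (x : Hgrp) (a : ZMod 4) :
    fHom x (a + 1) - fHom x a = 1 ∨ fHom x (a + 1) - fHom x a = 3 := by
  have hx : compat (x : MulAut M × Equiv.Perm Triad) := x.2
  have hx' : compat (x : MulAut M × Equiv.Perm Triad)⁻¹ := (inv_mem x.2 : _ ∈ Hgrp)
  set xv := (x : MulAut M × Equiv.Perm Triad) with hxv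
  obtain ⟨n, hn, hfS, hbS⟩ := theta ↑(xv.1 R0) (SetLike.coe_mem _)
  have hp : (↑R0 : RelM) (Triad.aug a) (Triad.aug (a + 1)) := (upu_pair a).1
  have hS := hx R0 _ _ hp
  rw [sigma_spec hx, sigma_spec hx] at hS
  have hbit0 := hfS _ _ hS
  have hbit : br n 2 2 (sigmaFun xv (a + 1) - sigmaFun xv a) = true := hbit0
  have hgoal1 : fHom x (a + 1) = sigmaFun xv (a + 1) := rfl
  have hgoal0 : fHom x a = sigmaFun xv a := rfl
  rw [hgoal1, hgoal0]
  have hne : sigmaFun xv (a + 1) - sigmaFun xv a ≠ 0 := by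
    intro h0
    have h1 : sigmaFun xv (a + 1) = sigmaFun xv a := sub_eq_zero.mp h0
    have h2 : xv.2 (Triad.aug (a + 1)) = xv.2 (Triad.aug a) := by
      rw [sigma_spec hx, sigma_spec hx, h1]
    have h3 := xv.2.injective h2
    have h4 : a + 1 = a := by injection h3
    have h5 : (1 : ZMod 4) = 0 := by simpa using h4
    exact absurd h5 (by decide)
  have hne2 : sigmaFun xv (a + 1) - sigmaFun xv a ≠ 2 := by
    intro h2
    rw [h2] at hbit
    have h0 := psi36 n hn hbit
    obtain ⟨q, hq1, hq2, hq3⟩ := hbS (Triad.aug 0) 2 0 h0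
    have hidxq : idx4 q = 0 := by
      rw [hq2]
      show (0 : ZMod 4) + 0 = 0
      ring
    have hq : q = Triad.aug 0 := by
      have := ty_aug_eq q hq1
      rwa [hidxq] at this
    rw [hq] at hq3
    obtain ⟨b, hb⟩ := aug_to_aug hx' 0
    have happ : xv.2 ((xv⁻¹).2 (Triad.aug 0)) = Triad.aug 0 := by
      rw [Prod.snd_inv]
      exact Equiv.apply_symm_apply _ _
    have h5 : (↑R0 : RelM) ((xv⁻¹).2 (Triad.aug 0)) ((xv⁻¹).2 (Triad.aug 0)) := by
      apply compat_inv_key hx' R0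
      rw [happ]
      exact hq3
    rw [hb] at h5
    exact upu_nofix b (R0_coe ▸ h5)
  rcases zmod4_cases (sigmaFun xv (a + 1) - sigmaFun xv a) with h | h | h | h
  · exact absurd h hne
  · exact Or.inl h
  · exact absurd h hne2
  · exact Or.inr h

/-- the two explicit elements of `Aut(S)` -/
lemma compat_t1 : compat (1, t1) := fun R p q h => equiv_t1 ↑R R.2 p q h

lemma compat_i1 : compat (1, i1) := fun R p q h => equiv_i1 ↑R R.2 p q h

def xT : Hgrp := ⟨(1, t1), compat_t1⟩
def xI : Hgrp := ⟨(1, i1), compat_i1⟩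

lemma fHom_xT (a : ZMod 4) : fHom xT a = a + 1 := rfl

lemma fHom_xI (a : ZMod 4) : fHom xI a = -a := rfl

lemma fHom_xT_pow (k : ℕ) : ∀ a : ZMod 4, (fHom xT ^ k) a = a + (k : ZMod 4) := by
  induction k with
  | zero => simp
  | succ m ih =>
    intro a
    rw [pow_succ]
    have h : (fHom xT ^ m * fHom xT) a = (fHom xT ^ m) (fHom xT a) := rfl
    rw [h, fHom_xT, ih (a + 1)]
    push_cast
    ring

/-- the subtraction-on-the-left involution -/
def subLeftPerm (i : ZMod 4) : Equiv.Perm (ZMod 4) :=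
  Function.Involutive.toPerm (fun a => i - a) (fun a => sub_sub_cancel i a)

def phiFun : DihedralGroup 4 → Equiv.Perm (ZMod 4)
  | .r i => Equiv.subRight i
  | .sr i => subLeftPerm i

/-- the embedding of the dihedral group of order 8 into `S₄` -/
def phi : DihedralGroup 4 →* Equiv.Perm (ZMod 4) :=
  MonoidHom.mk' phiFun (by
    rintro (i | i) (j | j) <;> ext a <;>
      simp only [r_mul_r, r_mul_sr, sr_mul_r, sr_mul_sr, phiFun, subLeftPerm,
        Equiv.Perm.mul_apply, Equiv.subRight_apply, Function.Involutive.coe_toPerm,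
        Function.Involutive.toPerm, Equiv.coe_fn_mk] <;>
      ring)

lemma phi_r (i : ZMod 4) (a : ZMod 4) : phi (.r i) a = a - i := rfl
lemma phi_sr (i : ZMod 4) (a : ZMod 4) : phi (.sr i) a = i - a := rfl

lemma phi_inj : Function.Injective phi := by
  rintro (i | i) (j | j) h
  · have h0 := Equiv.ext_iff.mp h 0
    rw [phi_r, phi_r] at h0
    have hij : i = j := by linear_combination -h0
    rw [hij]
  · exfalso
    have h0 := Equiv.ext_iff.mp h 0
    have h1 := Equiv.ext_iff.mp h 1
    rw [phi_r, phi_sr] at h0 h1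
    have : (2 : ZMod 4) = 0 := by linear_combination h1 - h0
    exact absurd this (by decide)
  · exfalso
    have h0 := Equiv.ext_iff.mp h 0
    have h1 := Equiv.ext_iff.mp h 1
    rw [phi_r, phi_sr] at h0 h1
    have : (2 : ZMod 4) = 0 := by linear_combination h0 - h1
    exact absurd this (by decide)
  · have h0 := Equiv.ext_iff.mp h 0
    rw [phi_sr, phi_sr] at h0
    have hij : i = j := by linear_combination h0
    rw [hij]

lemma natCast_val_zmod4 : ∀ j : ZMod 4, ((j.val : ℕ) : ZMod 4) = j := by decide

lemma range_le : fHom.range ≤ phi.range := by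
  rintro σ ⟨x, rfl⟩
  have h01 := step_diff x 0
  have h12 := step_diff x 1
  have h23 := step_diff x 2
  rw [show (0 : ZMod 4) + 1 = 1 by decide] at h01
  rw [show (1 : ZMod 4) + 1 = 2 by decide] at h12
  rw [show (2 : ZMod 4) + 1 = 3 by decide] at h23
  set σ := fHom x with hσ
  have inj := σ.injective
  rw [MonoidHom.mem_range]
  have m4 : (4 : ZMod 4) = 0 := by decide
  rcases h01 with h1 | h1 <;> rcases h12 with h2 | h2 <;> rcases h23 with h3 | h3
  · -- steps 1,1,1 : rotation
    refine ⟨.r (-(σ 0)), ?_⟩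
    ext a
    rw [phi_r, sub_neg_eq_add]
    rcases zmod4_cases a with rfl | rfl | rfl | rfl
    · ring
    · linear_combination -h1
    · linear_combination -h1 - h2
    · linear_combination -h1 - h2 - h3
  · exfalso
    have hc : σ 3 = σ 1 := by linear_combination h2 + h3 + m4
    exact absurd (inj hc) (by decide)
  · exfalso
    have hc : σ 2 = σ 0 := by linear_combination h1 + h2 + m4
    exact absurd (inj hc) (by decide)
  · exfalso
    have hc : σ 2 = σ 0 := by linear_combination h1 + h2 + m4
    exact absurd (inj hc) (by decide)
  · exfalso
    have hc : σ 2 = σ 0 := by linear_combination h1 + h2 + m4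
    exact absurd (inj hc) (by decide)
  · exfalso
    have hc : σ 2 = σ 0 := by linear_combination h1 + h2 + m4
    exact absurd (inj hc) (by decide)
  · exfalso
    have hc : σ 3 = σ 1 := by linear_combination h2 + h3 + m4
    exact absurd (inj hc) (by decide)
  · -- steps 3,3,3 : reflection
    refine ⟨.sr (σ 0), ?_⟩
    ext a
    rw [phi_sr]
    rcases zmod4_cases a with rfl | rfl | rfl | rfl
    · ring
    · linear_combination -h1 - m4
    · linear_combination -h1 - h2 - 2 * m4
    · linear_combination -h1 - h2 - h3 - 3 * m4
  -- done

lemma le_range : phi.range ≤ fHom.range := by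
  rintro σ ⟨d, rfl⟩
  rw [MonoidHom.mem_range]
  cases d with
  | r i =>
    refine ⟨xT ^ (-i).val, ?_⟩
    rw [map_pow]
    ext a
    rw [fHom_xT_pow, natCast_val_zmod4, phi_r]
    ring
  | sr i =>
    refine ⟨xT ^ i.val * xI, ?_⟩
    rw [map_mul, map_pow]
    ext a
    have : (fHom xT ^ i.val * fHom xI) a = (fHom xT ^ i.val) (fHom xI a) := rfl
    rw [this, fHom_xI, fHom_xT_pow, natCast_val_zmod4, phi_sr]
    ring

lemma range_eq : fHom.range = phi.range := le_antisymm range_le le_range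

noncomputable def e2 : fHom.range ≃* DihedralGroup 4 :=
  (MulEquiv.subgroupCongr range_eq).trans (MonoidHom.ofInjective phi_inj).symm

lemma card_range : Nat.card fHom.range = 8 := by
  have h1 : Nat.card fHom.range = Nat.card (DihedralGroup 4) := Nat.card_congr e2.toEquiv
  rw [h1, Nat.card_eq_fintype_card, DihedralGroup.card]

lemma range_ne_top : fHom.range ≠ ⊤ := by
  intro h
  have h1 : Nat.card fHom.range = 24 := by
    rw [h, Subgroup.card_top, Nat.card_eq_fintype_card, Fintype.card_perm]
    simp [ZMod.card, Nat.factorial]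
  rw [card_range] at h1
  exact absurd h1 (by norm_num)

end Final

/-- The group of permutations of the four augmented triads induced by `Aut(S)` is a group
of order 8 isomorphic to the dihedral group of order 8, a proper subgroup of `S₄`. -/
theorem autS_induced_on_aug :
    ∃ H : Subgroup (MulAut M × Equiv.Perm Triad),
      (∀ x, x ∈ H ↔ compat x) ∧
      ∃ f : H →* Equiv.Perm (ZMod 4),
        (∀ x : H, ∀ a : ZMod 4, (x : MulAut M × Equiv.Perm Triad).2 (Triad.aug a) =
          Triad.aug (f x a)) ∧
        Nat.card f.range = 8 ∧ f.range ≠ ⊤ ∧ Nonempty (f.range ≃* DihedralGroup 4) := by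
  exact ⟨Hgrp, fun x => Iff.rfl, fHom, fHom_spec, card_range, range_ne_top, ⟨e2⟩⟩

end CubeDance
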